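/- There exists a function F̄ : S_n → Mat_n(ℤ) such that: (i) for every braid β ∈ B_n, writing SGE(β) = (M_β, π_β), one has F̄(π_β) = M_β − M_βᵀ (so M_β − M_βᵀ depends only on the underlying permutation of β); (ii) F̄ is a 1-cocycle for the action of S_n on matrices: F̄(στ) = F̄(σ) + σ·F̄(τ) for all σ, τ ∈ S_n; and (iii) F̄(σ) is antisymmetric for every σ ∈ S_n. -/

import Mathlib

/-- The braid relations. -/
def braidRels (n : ℕ) : Set (FreeGroup (Fin (n - 1))) :=
  {r | (∃ i j : Fin (n - 1), (j : ℕ) = (i : ℕ) + 1 ∧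
        r = .of i * .of j * .of i * (.of j * .of i * .of j)⁻¹) ∨
       (∃ i j : Fin (n - 1), (i : ℕ) + 2 ≤ (j : ℕ) ∧
        r = .of i * .of j * (.of j * .of i)⁻¹)}

/-- The braid group `B_n`. -/
abbrev BraidGroup (n : ℕ) := PresentedGroup (braidRels n)

/-- The Artin generator `σ_{k+1}` (0-based index `k`). -/
def braidGen {n : ℕ} (i : Fin (n - 1)) : BraidGroup n := PresentedGroup.of i

/-- The strand index `k`, viewed inside `Fin n`. -/
def lo {n : ℕ} (k : Fin (n - 1)) : Fin n := ⟨k, by have := k.isLt; omega⟩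

/-- The strand index `k + 1`, viewed inside `Fin n`. -/
def hi {n : ℕ} (k : Fin (n - 1)) : Fin n := ⟨(k : ℕ) + 1, by have := k.isLt; omega⟩

/-- The action of `S_n` on `n × n` integer matrices, simultaneously permuting rows and
columns: `(π·M)[i,j] = M[π⁻¹ i, π⁻¹ j]`. -/
def matPermAct (n : ℕ) :
    Equiv.Perm (Fin n) →* MulAut (Multiplicative (Matrix (Fin n) (Fin n) ℤ)) where
  toFun π :=
    { toFun := fun M => Multiplicative.ofAdd fun i j => Multiplicative.toAdd M (π⁻¹ i) (π⁻¹ j)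
      invFun := fun M => Multiplicative.ofAdd fun i j => Multiplicative.toAdd M (π i) (π j)
      left_inv := fun M => funext fun i => funext fun j =>
        show Multiplicative.toAdd M (π⁻¹ (π i)) (π⁻¹ (π j)) = Multiplicative.toAdd M i j by simp
      right_inv := fun M => funext fun i => funext fun j =>
        show Multiplicative.toAdd M (π (π⁻¹ i)) (π (π⁻¹ j)) = Multiplicative.toAdd M i j by simp
      map_mul' := fun M M' => rfl }
  map_one' := by ext M; simp
  map_mul' := fun π ρ => by
    ext M
    rfl

/-- The semidirect product `Mat_n(ℤ) ⋊ S_n`. -/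
abbrev SGEGroup (n : ℕ) :=
  SemidirectProduct (Multiplicative (Matrix (Fin n) (Fin n) ℤ)) (Equiv.Perm (Fin n))
    (matPermAct n)

/-- The value `(O_{k,k+1}, (k, k+1))` of the super-Gauss-Epple homomorphism on the
generator `σ_k`, where `O_{i,j}` is the matrix with a single `1` entry at `(i,j)`. -/
def sgeGen {n : ℕ} (k : Fin (n - 1)) : SGEGroup n :=
  ⟨Multiplicative.ofAdd (Matrix.single (lo k) (hi k) 1), Equiv.swap (lo k) (hi k)⟩

/-- auxiliary: indicator of `i < j`. -/
def hfun {n : ℕ} (i j : Fin n) : ℤ := if i < j then 1 else 0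

/-- The explicit cocycle. -/
def FbarAux (n : ℕ) (s : Equiv.Perm (Fin n)) : Matrix (Fin n) (Fin n) ℤ :=
  Matrix.of fun i j => hfun i j - hfun (s⁻¹ i) (s⁻¹ j)

lemma FbarAux_apply {n : ℕ} (s : Equiv.Perm (Fin n)) (i j : Fin n) :
    FbarAux n s i j = hfun i j - hfun (s⁻¹ i) (s⁻¹ j) := rfl

open Matrix in
lemma FbarAux_swap {n : ℕ} (a b : Fin n) (hab : (a : ℕ) + 1 = b) :
    FbarAux n (Equiv.swap a b) =
      Matrix.single a b 1 - (Matrix.single a b 1)ᵀ := by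
  have key : ∀ x : Fin n, ((Equiv.swap a b x : Fin n) : ℕ) =
      if (x : ℕ) = (a : ℕ) then (b : ℕ) else if (x : ℕ) = (b : ℕ) then (a : ℕ) else (x : ℕ) := by
    intro x
    rw [Equiv.swap_apply_def]
    split_ifs with h1 h2 h3 h4 h5 <;> simp_all [Fin.ext_iff]
  ext i j
  simp only [FbarAux_apply, hfun, Equiv.swap_inv, Matrix.sub_apply, Matrix.transpose_apply,
    Matrix.single, Matrix.of_apply, Fin.lt_def, key, Fin.ext_iff]
  split_ifs <;> omega

open Matrix in
/-- There is a function `F̄ : S_n → Mat_n(ℤ)` such that (i) for every braid `β` with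
`SGE(β) = (M, π)` one has `F̄(π) = M - Mᵀ`; (ii) `F̄` is a 1-cocycle:
`F̄(στ) = F̄(σ) + σ·F̄(τ)` where `(σ·M)[i,j] = M[σ⁻¹ i, σ⁻¹ j]`; and (iii) every `F̄(σ)`
is antisymmetric. -/
theorem exists_cocycle_Fbar (n : ℕ) (hn : 2 ≤ n)
    (SGE : BraidGroup n →* SGEGroup n)
    (hSGE : ∀ k : Fin (n - 1), SGE (braidGen k) = sgeGen k) :
    ∃ F : Equiv.Perm (Fin n) → Matrix (Fin n) (Fin n) ℤ,
      (∀ β : BraidGroup n,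
        F (SGE β).right =
          Multiplicative.toAdd (SGE β).left - (Multiplicative.toAdd (SGE β).left)ᵀ) ∧
      (∀ s t : Equiv.Perm (Fin n),
        F (s * t) = F s + Matrix.of fun i j => F t (s⁻¹ i) (s⁻¹ j)) ∧
      (∀ s : Equiv.Perm (Fin n), (F s)ᵀ = -F s) := by
  refine ⟨FbarAux n, ?_, ?_, ?_⟩
  · -- (i)
    intro β
    have hβ : β ∈ Subgroup.closure
        (Set.range (PresentedGroup.of : Fin (n - 1) → BraidGroup n)) := by
      rw [PresentedGroup.closure_range_of]; trivial
    refine Subgroup.closure_induction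
      (p := fun g _ => FbarAux n (SGE g).right =
        Multiplicative.toAdd (SGE g).left - (Multiplicative.toAdd (SGE g).left)ᵀ)
      ?_ ?_ ?_ ?_ hβ
    · rintro x ⟨k, rfl⟩
      have h1 : SGE (PresentedGroup.of k) = sgeGen k := hSGE k
      rw [h1]
      have hab : ((lo k : Fin n) : ℕ) + 1 = (hi k : Fin n) := rfl
      simpa [sgeGen] using FbarAux_swap (lo k) (hi k) hab
    · simp only [_root_.map_one]
      ext i j
      simp [FbarAux_apply, SemidirectProduct.one_left, SemidirectProduct.one_right]
    · intro x y _ _ hx hy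
      rw [_root_.map_mul]
      set Mx := Multiplicative.toAdd (SGE x).left with hMx
      set My := Multiplicative.toAdd (SGE y).left with hMy
      set rx := (SGE x).right
      set ry := (SGE y).right
      ext i j
      have ex := congrFun (congrFun hx i) j
      have ex' := congrFun (congrFun hy (rx⁻¹ i)) (rx⁻¹ j)
      have hl : Multiplicative.toAdd ((SGE x * SGE y).left) =
          fun i j => Mx i j + My (rx⁻¹ i) (rx⁻¹ j) := rfl
      have hr : (SGE x * SGE y).right = rx * ry := rfl
      rw [hr, hl]
      simp only [FbarAux_apply, Matrix.sub_apply, Matrix.transpose_apply] at ex ex' ⊢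
      have hinv : (rx * ry)⁻¹ = ry⁻¹ * rx⁻¹ := mul_inv_rev rx ry
      rw [hinv]
      simp only [Equiv.Perm.mul_apply, Pi.sub_apply, Matrix.transpose_apply]
      show _ = (Mx i j + My (rx⁻¹ i) (rx⁻¹ j)) - (Mx j i + My (rx⁻¹ j) (rx⁻¹ i))
      linarith
    · intro x _ hx
      rw [_root_.map_inv]
      set Mx := Multiplicative.toAdd (SGE x).left with hMx
      set rx := (SGE x).right
      ext i j
      have ex := congrFun (congrFun hx (rx i)) (rx j)
      have hl : Multiplicative.toAdd ((SGE x)⁻¹).left =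
          fun i j => -Mx (rx i) (rx j) := rfl
      have hr : ((SGE x)⁻¹).right = rx⁻¹ := rfl
      rw [hr, hl]
      simp only [FbarAux_apply, Matrix.sub_apply, Matrix.transpose_apply,
        Equiv.Perm.inv_def, Equiv.symm_apply_apply, Equiv.symm_symm, inv_inv, Pi.sub_apply] at ex ⊢
      show _ = -Mx (rx i) (rx j) - -Mx (rx j) (rx i)
      linarith
  · -- (ii)
    intro s t
    ext i j
    simp only [FbarAux_apply, Matrix.add_apply, Matrix.of_apply, _root_.mul_inv_rev,
      Equiv.Perm.mul_apply]
    ring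
  · -- (iii)
    intro s
    ext i j
    simp only [FbarAux_apply, Matrix.transpose_apply, Matrix.neg_apply, hfun]
    rcases lt_trichotomy i j with h | h | h <;>
      rcases lt_trichotomy (s⁻¹ i) (s⁻¹ j) with h' | h' | h' <;>
      simp_all [lt_asymm, EmbeddingLike.apply_eq_iff_eq]
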